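/- arXiv:1309.3694 — 4 statements merged into one kernel-verified Lean document; each statement's English description precedes it below -/
import Mathlib

section
/- Let E be a Banach space and let s ∈ L(E) be invertible. Define α : L(E) → L(E) by α(a) = s a s⁻¹. Then the operator norm of α equals ‖s‖ · ‖s⁻¹‖. -/
/-- Lemma 3.3: the norm of the conjugation map `a ↦ s a s⁻¹` on `L(E)`
equals `‖s‖ · ‖s⁻¹‖`. -/
theorem stmt_1 (E : Type*) [NormedAddCommGroup E] [NormedSpace ℂ E] [CompleteSpace E]
    (s : E ≃L[ℂ] E) (α : (E →L[ℂ] E) →L[ℂ] (E →L[ℂ] E))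
    (hα : ∀ a : E →L[ℂ] E,
      α a = (s : E →L[ℂ] E).comp (a.comp (s.symm : E →L[ℂ] E))) :
    ‖α‖ = ‖(s : E →L[ℂ] E)‖ * ‖(s.symm : E →L[ℂ] E)‖ := by
  apply le_antisymm
  · -- upper bound
    apply ContinuousLinearMap.opNorm_le_bound _ (by positivity)
    intro a
    rw [hα a]
    calc ‖(s : E →L[ℂ] E).comp (a.comp (s.symm : E →L[ℂ] E))‖
        ≤ ‖(s : E →L[ℂ] E)‖ * ‖a.comp (s.symm : E →L[ℂ] E)‖ :=
          ContinuousLinearMap.opNorm_comp_le _ _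
      _ ≤ ‖(s : E →L[ℂ] E)‖ * (‖a‖ * ‖(s.symm : E →L[ℂ] E)‖) := by
          gcongr; exact ContinuousLinearMap.opNorm_comp_le _ _
      _ = ‖(s : E →L[ℂ] E)‖ * ‖(s.symm : E →L[ℂ] E)‖ * ‖a‖ := by ring
  · -- lower bound
    -- rank-one estimate
    have key : ∀ (f : E →L[ℂ] ℂ) (y : E),
        ‖f.comp (s.symm : E →L[ℂ] E)‖ * ‖s y‖ ≤ ‖α‖ * (‖f‖ * ‖y‖) := by
      intro f y
      have h1 : α (ContinuousLinearMap.smulRight f y)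
          = ContinuousLinearMap.smulRight (f.comp (s.symm : E →L[ℂ] E)) (s y) := by
        rw [hα]
        ext x
        simp
      have h2 := ContinuousLinearMap.le_opNorm α (ContinuousLinearMap.smulRight f y)
      rw [h1, ContinuousLinearMap.norm_smulRight_apply,
        ContinuousLinearMap.norm_smulRight_apply] at h2
      exact h2
    -- step: ∀ y, ‖s.symm‖ * ‖s y‖ ≤ ‖α‖ * ‖y‖
    have step : ∀ y : E, ‖(s.symm : E →L[ℂ] E)‖ * ‖s y‖ ≤ ‖α‖ * ‖y‖ := by
      intro y
      by_cases hy : s y = 0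
      · have : y = 0 := by
          have := congrArg s.symm hy
          simpa using this
        simp [hy, this]
      have hsy : (0:ℝ) < ‖s y‖ := norm_pos_iff.mpr hy
      rw [← le_div_iff₀ hsy]
      apply ContinuousLinearMap.opNorm_le_bound _ (by positivity)
      intro x
      by_cases hx : (s.symm : E →L[ℂ] E) x = 0
      · rw [hx, norm_zero]; positivity
      obtain ⟨f, hf1, hfx⟩ := exists_dual_vector ℂ ((s.symm : E →L[ℂ] E) x) (norm_ne_zero_iff.mpr hx)
      have : ‖(s.symm : E →L[ℂ] E) x‖ = ‖f ((s.symm : E →L[ℂ] E) x)‖ := by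
        rw [hfx]; simp
      rw [this]
      calc ‖f ((s.symm : E →L[ℂ] E) x)‖
          = ‖(f.comp (s.symm : E →L[ℂ] E)) x‖ := rfl
        _ ≤ ‖f.comp (s.symm : E →L[ℂ] E)‖ * ‖x‖ := ContinuousLinearMap.le_opNorm _ _
        _ ≤ (‖α‖ * ‖y‖ / ‖s y‖) * ‖x‖ := by
            gcongr
            rw [le_div_iff₀ hsy]
            have hk := key f y
            rw [hf1, one_mul] at hk
            exact hk
    by_cases hss : ‖(s.symm : E →L[ℂ] E)‖ = 0
    · -- degenerate: E is trivial
      have hs0 : (s.symm : E →L[ℂ] E) = 0 := by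
        rwa [norm_eq_zero] at hss
      have htriv : ∀ x : E, x = 0 := by
        intro x
        have h0 : (s.symm : E →L[ℂ] E) x = 0 := by rw [hs0]; rfl
        have h1 : s ((s.symm : E →L[ℂ] E) x) = x := s.apply_symm_apply x
        rw [h0] at h1
        simpa using h1.symm
      have hα0 : α = 0 := by
        ext a x
        rw [hα]
        simp [htriv x]
      have hsnorm : ‖(s : E →L[ℂ] E)‖ = 0 := by
        rw [norm_eq_zero]
        ext x; simp [htriv x]
      rw [hss, mul_zero]
      exact norm_nonneg α
    have hsspos : (0:ℝ) < ‖(s.symm : E →L[ℂ] E)‖ :=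
      lt_of_le_of_ne (norm_nonneg _) (Ne.symm hss)
    rw [← le_div_iff₀ hsspos]
    apply ContinuousLinearMap.opNorm_le_bound _ (by positivity)
    intro y
    rw [div_mul_eq_mul_div, le_div_iff₀ hsspos, mul_comm]
    exact step y
end

section
/- Let d be a positive integer, let α_1, …, α_d be nonzero complex numbers, and set β = min_j |α_j| and γ = max_j |α_j|. Let E be a normed vector space and ξ_1, …, ξ_d ∈ E with ‖∑_{j=1}^d ξ_j‖ = 1. Then there exist complex numbers ζ_1, …, ζ_d of modulus 1 and an index j₀ ∈ {1, …, d} such that either ‖∑_{k=1}^d (ζ_{j₀} α_{j₀})(ζ_k α_k)⁻¹ ξ_k‖ ≥ β^{−1/2} γ^{1/2} or ‖∑_{k=1}^d (ζ_{j₀} α_{j₀})⁻¹(ζ_k α_k) ξ_k‖ ≥ β^{−1/2} γ^{1/2}. -/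
/-- Lemma 5.9: given nonzero scalars `α_j` with minimal modulus `β` and maximal modulus `γ`,
and vectors `ξ_j` with `‖∑ ξ_j‖ = 1`, there are unimodular scalars `ζ_j` and an index `j₀`
such that one of the two rescaled sums has norm at least `β^{-1/2} γ^{1/2}`. -/
theorem stmt_5 (d : ℕ) (hd : 0 < d) (α : Fin d → ℂ) (hα : ∀ j, α j ≠ 0)
    (β γ : ℝ)
    (hβ : IsLeast (Set.range fun j => ‖α j‖) β)
    (hγ : IsGreatest (Set.range fun j => ‖α j‖) γ)
    (E : Type*) [NormedAddCommGroup E] [NormedSpace ℂ E]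
    (ξ : Fin d → E) (hξ : ‖∑ j, ξ j‖ = 1) :
    ∃ (ζ : Fin d → ℂ) (j₀ : Fin d), (∀ j, ‖ζ j‖ = 1) ∧
      (β ^ (-(1 : ℝ) / 2) * γ ^ ((1 : ℝ) / 2) ≤
          ‖∑ k, ((ζ j₀ * α j₀) * (ζ k * α k)⁻¹) • ξ k‖ ∨
        β ^ (-(1 : ℝ) / 2) * γ ^ ((1 : ℝ) / 2) ≤
          ‖∑ k, ((ζ j₀ * α j₀)⁻¹ * (ζ k * α k)) • ξ k‖) := by
  obtain ⟨jβ, hjβ⟩ := hβ.1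
  obtain ⟨jγ, hjγ⟩ := hγ.1
  simp only at hjβ hjγ
  have hβpos : 0 < β := hjβ ▸ norm_pos_iff.mpr (hα jβ)
  have hβγ : β ≤ γ := hγ.2 ⟨jβ, hjβ⟩
  have hγpos : 0 < γ := lt_of_lt_of_le hβpos hβγ
  have hTeq : β ^ (-(1 : ℝ) / 2) * γ ^ ((1 : ℝ) / 2) = Real.sqrt (γ / β) := by
    rw [show (-(1:ℝ)/2) = -(1/2) by norm_num, Real.rpow_neg hβpos.le,
      ← Real.sqrt_eq_rpow, ← Real.sqrt_eq_rpow, Real.sqrt_div hγpos.le, inv_mul_eq_div]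
  set s : ℝ := Real.sqrt (γ / β) with hs
  have hs0 : 0 ≤ s := Real.sqrt_nonneg _
  have hs2 : s ^ 2 = γ / β := Real.sq_sqrt (by positivity)
  -- Hahn-Banach functional
  have hne : (∑ j, ξ j) ≠ 0 := by
    intro h; rw [h, norm_zero] at hξ; norm_num at hξ
  obtain ⟨f, hf1, hfx⟩ := exists_dual_vector ℂ (∑ j, ξ j) (norm_ne_zero_iff.mpr hne)
  set z : Fin d → ℂ := fun k => f (ξ k) with hz
  have hzsum : ∑ k, z k = 1 := by
    rw [hz, ← map_sum, hfx, hξ]; norm_num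
  have hfle : ∀ c : Fin d → ℂ, ‖∑ k, c k * z k‖ ≤ ‖∑ k, (c k) • ξ k‖ := by
    intro c
    have : ∑ k, c k * z k = f (∑ k, (c k) • ξ k) := by
      rw [map_sum]; simp [hz, smul_eq_mul]
    rw [this]
    calc ‖f (∑ k, (c k) • ξ k)‖ ≤ ‖f‖ * ‖∑ k, (c k) • ξ k‖ := f.le_opNorm _
      _ = ‖∑ k, (c k) • ξ k‖ := by rw [hf1, one_mul]
  set t : Fin d → ℝ := fun k => ‖α k‖ with ht
  have htpos : ∀ k, 0 < t k := fun k => norm_pos_iff.mpr (hα k)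
  have htβ : ∀ k, β ≤ t k := fun k => hβ.2 ⟨k, rfl⟩
  have htγ : ∀ k, t k ≤ γ := fun k => hγ.2 ⟨k, rfl⟩
  set A : ℝ := ∑ k, ‖z k‖ / t k with hA
  have hA0 : 0 ≤ A :=
    Finset.sum_nonneg fun k _ => div_nonneg (norm_nonneg _) (htpos k).le
  set B : ℝ := ∑ k, t k * ‖z k‖ with hB
  have hB0 : 0 ≤ B := by
    rw [hB]
    refine Finset.sum_nonneg fun k _ => mul_nonneg (htpos k).le (norm_nonneg _)
  have hS : 1 ≤ ∑ k, ‖z k‖ := by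
    calc (1:ℝ) = ‖∑ k, z k‖ := by rw [hzsum]; norm_num
      _ ≤ ∑ k, ‖z k‖ := norm_sum_le _ _
  have hkey : 2 * s ≤ γ * A + B / β := by
    have hterm : ∀ k, 2 * s * ‖z k‖ ≤ γ * (‖z k‖ / t k) + (t k * ‖z k‖) / β := by
      intro k
      have h1 : 2 * s ≤ γ / t k + t k / β := by
        rw [div_add_div _ _ (htpos k).ne' hβpos.ne',
          le_div_iff₀ (mul_pos (htpos k) hβpos)]
        have hγ' : s ^ 2 * β = γ := by
          rw [hs2]; field_simp
        nlinarith [sq_nonneg (s * β - t k), htβ k, htpos k, hβpos]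
      have h2 : 0 ≤ ‖z k‖ := norm_nonneg _
      calc 2 * s * ‖z k‖ ≤ (γ / t k + t k / β) * ‖z k‖ := by nlinarith
        _ = γ * (‖z k‖ / t k) + (t k * ‖z k‖) / β := by ring
    calc 2 * s = 2 * s * 1 := by ring
      _ ≤ 2 * s * ∑ k, ‖z k‖ := by nlinarith
      _ = ∑ k, 2 * s * ‖z k‖ := by rw [Finset.mul_sum]
      _ ≤ ∑ k, (γ * (‖z k‖ / t k) + (t k * ‖z k‖) / β) :=
          Finset.sum_le_sum fun k _ => hterm k
      _ = γ * A + B / β := by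
          rw [Finset.sum_add_distrib, hA, hB, Finset.mul_sum, ← Finset.sum_div]
  rw [hTeq]
  have hαcast : ∀ k, ((‖α k‖ : ℝ) : ℂ) ≠ 0 :=
    fun k => Complex.ofReal_ne_zero.mpr (norm_ne_zero_iff.mpr (hα k))
  have hαdiv : ∀ k, (starRingEnd ℂ) (α k) / (‖α k‖ : ℂ) * α k = ((t k : ℝ) : ℂ) := by
    intro k
    rw [div_mul_eq_mul_div, mul_comm, Complex.mul_conj', sq, mul_div_assoc,
      div_self (hαcast k), mul_one]
  rcases le_or_gt s (γ * A) with hcase | hcase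
  · -- first alternative, j₀ := jγ, align phases of z
    set P : Fin d → ℂ := fun k => if z k = 0 then 1 else z k / ‖z k‖ with hP
    set ζ : Fin d → ℂ := fun k => P k * ((starRingEnd ℂ) (α k) / ‖α k‖) with hζ
    have hζα : ∀ k, ζ k * α k = P k * ((t k : ℝ) : ℂ) := by
      intro k
      rw [hζ]; dsimp only; rw [mul_assoc, hαdiv]
    have hPnorm : ∀ j, ‖P j‖ = 1 := by
      intro j
      rw [hP]; dsimp only
      by_cases h : z j = 0
      · rw [if_pos h, norm_one]
      · have hzj : ‖z j‖ ≠ 0 := norm_ne_zero_iff.mpr h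
        rw [if_neg h, norm_div, Complex.norm_real, norm_norm, div_self hzj]
    have hζnorm : ∀ j, ‖ζ j‖ = 1 := by
      intro j
      rw [hζ]; dsimp only
      rw [norm_mul, hPnorm, norm_div, RCLike.norm_conj, Complex.norm_real, norm_norm,
        div_self (norm_ne_zero_iff.mpr (hα j)), one_mul]
    refine ⟨ζ, jγ, hζnorm, Or.inl ?_⟩
    have hcoef : ∀ k, ((ζ jγ * α jγ) * (ζ k * α k)⁻¹) * z k
        = (P jγ * ((t jγ : ℝ) : ℂ)) * ((‖z k‖ / t k : ℝ) : ℂ) := by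
      intro k
      rw [hζα, hζα, mul_assoc]
      congr 1
      by_cases h : z k = 0
      · simp [hP, h]
      · have hzk : ((‖z k‖ : ℝ) : ℂ) ≠ 0 :=
          Complex.ofReal_ne_zero.mpr (norm_ne_zero_iff.mpr h)
        have htk : ((t k : ℝ) : ℂ) ≠ 0 := hαcast k
        rw [hP]; dsimp only; rw [if_neg h]
        field_simp
        push_cast; field_simp
    calc s ≤ γ * A := hcase
      _ = ‖∑ k, ((ζ jγ * α jγ) * (ζ k * α k)⁻¹) * z k‖ := by
          rw [Finset.sum_congr rfl fun k _ => hcoef k, ← Finset.mul_sum]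
          have h2 : ∑ k, ((‖z k‖ / t k : ℝ) : ℂ) = ((A : ℝ) : ℂ) := by
            rw [hA]; push_cast; ring
          rw [h2, norm_mul, norm_mul, hPnorm, one_mul, Complex.norm_real,
            Complex.norm_real, Real.norm_eq_abs, Real.norm_eq_abs,
            abs_of_nonneg (htpos jγ).le, abs_of_nonneg hA0]
          have : t jγ = γ := hjγ
          rw [this]
      _ ≤ ‖∑ k, ((ζ jγ * α jγ) * (ζ k * α k)⁻¹) • ξ k‖ := hfle _
  · -- second alternative, j₀ := jβ, anti-align phases of z
    have hcase2 : s ≤ B / β := by nlinarith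
    set P : Fin d → ℂ := fun k => if z k = 0 then 1 else (starRingEnd ℂ) (z k) / ‖z k‖
      with hP
    set ζ : Fin d → ℂ := fun k => P k * ((starRingEnd ℂ) (α k) / ‖α k‖) with hζ
    have hζα : ∀ k, ζ k * α k = P k * ((t k : ℝ) : ℂ) := by
      intro k
      rw [hζ]; dsimp only; rw [mul_assoc, hαdiv]
    have hPnorm : ∀ j, ‖P j‖ = 1 := by
      intro j
      rw [hP]; dsimp only
      by_cases h : z j = 0
      · rw [if_pos h, norm_one]
      · have hzj : ‖z j‖ ≠ 0 := norm_ne_zero_iff.mpr h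
        rw [if_neg h, norm_div, RCLike.norm_conj, Complex.norm_real, norm_norm,
          div_self hzj]
    have hζnorm : ∀ j, ‖ζ j‖ = 1 := by
      intro j
      rw [hζ]; dsimp only
      rw [norm_mul, hPnorm, norm_div, RCLike.norm_conj, Complex.norm_real, norm_norm,
        div_self (norm_ne_zero_iff.mpr (hα j)), one_mul]
    refine ⟨ζ, jβ, hζnorm, Or.inr ?_⟩
    have hcoef : ∀ k, ((ζ jβ * α jβ)⁻¹ * (ζ k * α k)) * z k
        = (P jβ * ((t jβ : ℝ) : ℂ))⁻¹ * ((t k * ‖z k‖ : ℝ) : ℂ) := by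
      intro k
      rw [hζα, hζα, mul_assoc]
      congr 1
      by_cases h : z k = 0
      · simp [hP, h]
      · have hzk : ((‖z k‖ : ℝ) : ℂ) ≠ 0 :=
          Complex.ofReal_ne_zero.mpr (norm_ne_zero_iff.mpr h)
        have hcz : (starRingEnd ℂ) (z k) * z k = ((‖z k‖ : ℝ) : ℂ) ^ 2 := by
          rw [mul_comm, Complex.mul_conj']
        rw [hP]; dsimp only; rw [if_neg h]
        have h3 : (starRingEnd ℂ) (z k) / ((‖z k‖ : ℝ) : ℂ) * ((t k : ℝ) : ℂ) * z k
            = ((t k : ℝ) : ℂ) * ((starRingEnd ℂ) (z k) * z k) / ((‖z k‖ : ℝ) : ℂ) := by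
          ring
        rw [h3, hcz, Complex.ofReal_mul, sq, mul_div_assoc,
          mul_div_cancel_left₀ _ hzk]
    calc s ≤ B / β := hcase2
      _ = ‖∑ k, ((ζ jβ * α jβ)⁻¹ * (ζ k * α k)) * z k‖ := by
          rw [Finset.sum_congr rfl fun k _ => hcoef k, ← Finset.mul_sum]
          have h2 : ∑ k, ((t k * ‖z k‖ : ℝ) : ℂ) = ((B : ℝ) : ℂ) := by
            rw [hB]; push_cast; ring
          rw [h2, norm_mul, norm_inv, norm_mul, hPnorm, one_mul, Complex.norm_real,
            Complex.norm_real, Real.norm_eq_abs, Real.norm_eq_abs,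
            abs_of_nonneg (htpos jβ).le, abs_of_nonneg hB0]
          have : t jβ = β := hjβ
          rw [this, inv_mul_eq_div]
      _ ≤ ‖∑ k, ((ζ jβ * α jβ)⁻¹ * (ζ k * α k)) • ξ k‖ := hfle _
end

section
/- Let A be a unital Banach algebra, let d ∈ ℤ_{>0}, equip M_d with an algebra norm, and let B = M_d ⊗ A with any algebra tensor norm. Suppose z ∈ B ⊗̂ B satisfies Δ_B(z) = 1 and (x ⊗ 1_A ⊗ 1_B) z = z (1_B ⊗ x ⊗ 1_A) for all x ∈ M_d. Then there exist elements z_{j,k} ∈ A ⊗̂ A for j, k = 1, …, d such that z = ∑_{j,k,l=1}^d e_{j,k} ⊗ e_{l,j} ⊗ z_{l,k} (under the canonical identification B ⊗̂ B ≅ M_d ⊗ M_d ⊗ (A ⊗̂ A)) and ∑_{j=1}^d Δ_A(z_{j,j}) = 1. -/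
open scoped TensorProduct

set_option synthInstance.maxHeartbeats 1000000
set_option maxHeartbeats 1000000

namespace Stmt13Aux

variable {d : ℕ} {C : Type*} [AddCommMonoid C] [Module ℂ C]

/-- evaluation of a matrix entry as a linear map -/
def entryLM (d : ℕ) (j k : Fin d) : Matrix (Fin d) (Fin d) ℂ →ₗ[ℂ] ℂ where
  toFun x := x j k
  map_add' := by intros; simp
  map_smul' := by intros; simp

noncomputable def coefLM (d : ℕ) (C : Type*) [AddCommMonoid C] [Module ℂ C]
    (j k l m : Fin d) :
    TensorProduct ℂ
      (TensorProduct ℂ (Matrix (Fin d) (Fin d) ℂ) (Matrix (Fin d) (Fin d) ℂ)) C →ₗ[ℂ] C :=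
  (TensorProduct.lid ℂ C).toLinearMap ∘ₗ
    LinearMap.rTensor C ((TensorProduct.lid ℂ ℂ).toLinearMap ∘ₗ
      TensorProduct.map (entryLM d j k) (entryLM d l m))

lemma coefLM_tmul (j k l m : Fin d) (x y : Matrix (Fin d) (Fin d) ℂ) (c : C) :
    coefLM d C j k l m ((x ⊗ₜ[ℂ] y) ⊗ₜ[ℂ] c) = (x j k * y l m) • c := by
  simp [coefLM, entryLM, smul_smul]
  rfl

lemma coefLM_basis (j k l m J K L M : Fin d) (c : C) :
    coefLM d C J K L M
      ((Matrix.single j k (1 : ℂ) ⊗ₜ[ℂ] Matrix.single l m (1 : ℂ)) ⊗ₜ[ℂ] c)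
      = if j = J ∧ k = K ∧ l = L ∧ m = M then c else 0 := by
  rw [coefLM_tmul]
  simp only [Matrix.single, Matrix.of_apply]
  split_ifs <;> simp_all

lemma tmul_term_eq (x y : Matrix (Fin d) (Fin d) ℂ) (c : C) (j k l m : Fin d) :
    (Matrix.single j k (x j k) ⊗ₜ[ℂ] Matrix.single l m (y l m)) ⊗ₜ[ℂ] c
      = (Matrix.single j k (1 : ℂ) ⊗ₜ[ℂ] Matrix.single l m (1 : ℂ)) ⊗ₜ[ℂ]
          ((x j k * y l m) • c) := by
  rw [show Matrix.single j k (x j k) = x j k • Matrix.single j k (1:ℂ) by simp,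
      show Matrix.single l m (y l m) = y l m • Matrix.single l m (1:ℂ) by simp,
    TensorProduct.tmul_smul]
  simp only [TensorProduct.tmul_smul, TensorProduct.smul_tmul, smul_smul]
  rw [mul_comm]

lemma expand (v : TensorProduct ℂ
    (TensorProduct ℂ (Matrix (Fin d) (Fin d) ℂ) (Matrix (Fin d) (Fin d) ℂ)) C) :
    v = ∑ j : Fin d, ∑ k : Fin d, ∑ l : Fin d, ∑ m : Fin d,
      (Matrix.single j k (1 : ℂ) ⊗ₜ[ℂ] Matrix.single l m (1 : ℂ)) ⊗ₜ[ℂ]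
        coefLM d C j k l m v := by
  induction v using TensorProduct.induction_on with
  | zero => simp
  | tmul u c =>
    induction u using TensorProduct.induction_on with
    | zero => simp [TensorProduct.zero_tmul]
    | tmul x y =>
      simp only [coefLM_tmul (C := C)]
      have hMM : (x ⊗ₜ[ℂ] y :
          TensorProduct ℂ (Matrix (Fin d) (Fin d) ℂ) (Matrix (Fin d) (Fin d) ℂ)) =
          ∑ j : Fin d, ∑ k : Fin d, ∑ l : Fin d, ∑ m : Fin d,
            (x j k * y l m) •
              (Matrix.single j k (1 : ℂ) ⊗ₜ[ℂ] Matrix.single l m (1 : ℂ)) := by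
        conv_lhs => rw [Matrix.matrix_eq_sum_single x,
          Matrix.matrix_eq_sum_single y]
        rw [TensorProduct.sum_tmul]
        refine Finset.sum_congr rfl fun j _ => ?_
        rw [TensorProduct.sum_tmul]
        refine Finset.sum_congr rfl fun k _ => ?_
        rw [TensorProduct.tmul_sum]
        refine Finset.sum_congr rfl fun l _ => ?_
        rw [TensorProduct.tmul_sum]
        refine Finset.sum_congr rfl fun m _ => ?_
        rw [show Matrix.single j k (x j k)
              = x j k • Matrix.single j k (1:ℂ) by simp,
          show Matrix.single l m (y l m)
              = y l m • Matrix.single l m (1:ℂ) by simp,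
          TensorProduct.tmul_smul, TensorProduct.smul_tmul', smul_smul, mul_comm (y l m),
          TensorProduct.smul_tmul']
      conv_lhs => rw [hMM]
      simp only [TensorProduct.sum_tmul, TensorProduct.smul_tmul]
    | add u₁ u₂ h₁ h₂ =>
      rw [TensorProduct.add_tmul]
      conv_lhs => rw [h₁, h₂]
      simp [TensorProduct.add_tmul, map_add, TensorProduct.tmul_add, Finset.sum_add_distrib]
  | add u v hu hv =>
    conv_lhs => rw [hu, hv]
    simp [map_add, TensorProduct.tmul_add, Finset.sum_add_distrib]

lemma std_mul (p q j k : Fin d) :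
    Matrix.single p q (1 : ℂ) * Matrix.single j k (1 : ℂ)
      = if q = j then Matrix.single p k (1 : ℂ) else 0 := by
  split_ifs with h
  · subst h; rw [Matrix.single_mul_single_same, one_mul]
  · exact Matrix.single_mul_single_of_ne 1 p q j h 1


lemma coef_sum (w : Fin d → Fin d → Fin d → Fin d → C) (J K L M : Fin d) :
    coefLM d C J K L M (∑ j : Fin d, ∑ k : Fin d, ∑ l : Fin d, ∑ m : Fin d,
      (Matrix.single j k (1 : ℂ) ⊗ₜ[ℂ] Matrix.single l m (1 : ℂ)) ⊗ₜ[ℂ]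
        w j k l m) = w J K L M := by
  simp [map_sum, coefLM_basis, ite_and, Finset.sum_ite_eq, Finset.sum_ite_eq']

lemma rowcoef_tmul {A : Type*} [AddCommMonoid A] [Module ℂ A] (j k : Fin d)
    (x : Matrix (Fin d) (Fin d) ℂ) (a : A) :
    ((TensorProduct.lid ℂ A).toLinearMap ∘ₗ LinearMap.rTensor A (entryLM d j k))
      (x ⊗ₜ[ℂ] a) = x j k • a := by
  simp [entryLM]
  rfl

section RingC

variable {C : Type*} [Ring C] [Algebra ℂ C]

lemma mul_eq (x y : TensorProduct ℂ
    (TensorProduct ℂ (Matrix (Fin d) (Fin d) ℂ) (Matrix (Fin d) (Fin d) ℂ)) C) :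
    x * y = Algebra.TensorProduct.mul (R := ℂ) x y := rfl

lemma coef_mul_left (p q J K L M : Fin d)
    (v : TensorProduct ℂ
      (TensorProduct ℂ (Matrix (Fin d) (Fin d) ℂ) (Matrix (Fin d) (Fin d) ℂ)) C) :
    coefLM d C J K L M
        (((Matrix.single p q (1 : ℂ) ⊗ₜ[ℂ] (1 : Matrix (Fin d) (Fin d) ℂ))
          ⊗ₜ[ℂ] (1 : C)) * v)
      = if p = J then coefLM d C q K L M v else 0 := by
  rw [mul_eq]
  induction v using TensorProduct.induction_on with
  | zero => simp
  | add u v hu hv =>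
    simp only [map_add, hu, hv]
    split_ifs <;> simp
  | tmul u c =>
    induction u using TensorProduct.induction_on with
    | zero => simp [TensorProduct.zero_tmul]
    | add u₁ u₂ h₁ h₂ =>
      rw [TensorProduct.add_tmul]
      simp only [map_add, h₁, h₂]
      split_ifs <;> simp
    | tmul x y =>
      rw [Algebra.TensorProduct.mul_apply, Algebra.TensorProduct.tmul_mul_tmul,
        one_mul, one_mul, coefLM_tmul, coefLM_tmul]
      by_cases hpJ : p = J
      · subst hpJ
        rw [Matrix.single_mul_apply_same, one_mul, if_pos rfl]
      · have h0 : (Matrix.single p q (1 : ℂ) * x) J K = 0 :=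
          Matrix.single_mul_apply_of_ne 1 p q J K (fun h => hpJ h.symm) x
        rw [h0, if_neg hpJ, zero_mul, zero_smul]

lemma coef_mul_right (p q J K L M : Fin d)
    (v : TensorProduct ℂ
      (TensorProduct ℂ (Matrix (Fin d) (Fin d) ℂ) (Matrix (Fin d) (Fin d) ℂ)) C) :
    coefLM d C J K L M
        (v * (((1 : Matrix (Fin d) (Fin d) ℂ) ⊗ₜ[ℂ] Matrix.single p q (1 : ℂ))
          ⊗ₜ[ℂ] (1 : C)))
      = if q = M then coefLM d C J K L p v else 0 := by
  rw [mul_eq]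
  induction v using TensorProduct.induction_on with
  | zero => simp
  | add u v hu hv =>
    simp only [map_add, LinearMap.add_apply, hu, hv]
    split_ifs <;> simp
  | tmul u c =>
    induction u using TensorProduct.induction_on with
    | zero => simp [TensorProduct.zero_tmul]
    | add u₁ u₂ h₁ h₂ =>
      rw [TensorProduct.add_tmul]
      simp only [map_add, LinearMap.add_apply, h₁, h₂]
      split_ifs <;> simp
    | tmul x y =>
      rw [Algebra.TensorProduct.mul_apply, Algebra.TensorProduct.tmul_mul_tmul,
        mul_one, mul_one, coefLM_tmul, coefLM_tmul]
      by_cases hqM : q = M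
      · subst hqM
        rw [Matrix.mul_single_apply_same, mul_one, if_pos rfl]
      · have h0 : (y * Matrix.single p q (1 : ℂ)) L M = 0 :=
          Matrix.mul_single_apply_of_ne 1 p q L M (fun h => hqM h.symm) y
        rw [h0, if_neg hqM, mul_zero, zero_smul]

end RingC

end Stmt13Aux


/-- Lemma 5.3: let `B = M_d ⊗ A`, and identify `B ⊗̂ B` with `M_d ⊗ M_d ⊗ (A ⊗̂ A)`
(the Banach algebra `A ⊗̂ A` is modelled abstractly by a Banach algebra `C`, with
`Δ_A : C → A` the induced multiplication map and `Δ_B` the multiplication map of `B`,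
determined by `Δ_B((x₁ ⊗ x₂) ⊗ c) = (x₁ x₂) ⊗ Δ_A(c)`).  If `z` satisfies `Δ_B(z) = 1`
and `(x ⊗ 1_A ⊗ 1_B) z = z (1_B ⊗ x ⊗ 1_A)` for all `x ∈ M_d`, then there are
`z_{j,k} ∈ A ⊗̂ A` with `z = ∑_{j,k,l} e_{j,k} ⊗ e_{l,j} ⊗ z_{l,k}` and
`∑_j Δ_A(z_{j,j}) = 1`. -/
theorem stmt_13 (d : ℕ) (hd : 0 < d)
    (A : Type*) [NormedRing A] [NormedAlgebra ℂ A] [CompleteSpace A]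
    (C : Type*) [NormedRing C] [NormedAlgebra ℂ C] [CompleteSpace C]
    (ΔA : C →ₗ[ℂ] A)
    (z : TensorProduct ℂ
      (TensorProduct ℂ (Matrix (Fin d) (Fin d) ℂ) (Matrix (Fin d) (Fin d) ℂ)) C)
    (ΔB : TensorProduct ℂ
        (TensorProduct ℂ (Matrix (Fin d) (Fin d) ℂ) (Matrix (Fin d) (Fin d) ℂ)) C →ₗ[ℂ]
      TensorProduct ℂ (Matrix (Fin d) (Fin d) ℂ) A)
    (hΔB : ∀ (x₁ x₂ : Matrix (Fin d) (Fin d) ℂ) (c : C),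
      ΔB ((x₁ ⊗ₜ[ℂ] x₂) ⊗ₜ[ℂ] c) = (x₁ * x₂) ⊗ₜ[ℂ] ΔA c)
    (hΔBz : ΔB z = 1)
    (hz : ∀ x : Matrix (Fin d) (Fin d) ℂ,
      ((x ⊗ₜ[ℂ] (1 : Matrix (Fin d) (Fin d) ℂ)) ⊗ₜ[ℂ] (1 : C)) * z =
        z * (((1 : Matrix (Fin d) (Fin d) ℂ) ⊗ₜ[ℂ] x) ⊗ₜ[ℂ] (1 : C))) :
    ∃ zc : Fin d → Fin d → C,
      z = ∑ j : Fin d, ∑ k : Fin d, ∑ l : Fin d,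
        ((Matrix.single j k (1 : ℂ)) ⊗ₜ[ℂ] (Matrix.single l j (1 : ℂ)))
          ⊗ₜ[ℂ] zc l k ∧
      ∑ j : Fin d, ΔA (zc j j) = 1 := by
  classical
  obtain ⟨w, hzexp⟩ : ∃ w : Fin d → Fin d → Fin d → Fin d → C,
      z = ∑ j : Fin d, ∑ k : Fin d, ∑ l : Fin d, ∑ m : Fin d,
        (Matrix.single j k (1 : ℂ) ⊗ₜ[ℂ] Matrix.single l m (1 : ℂ)) ⊗ₜ[ℂ]
          w j k l m :=
    ⟨fun j k l m => Stmt13Aux.coefLM d C j k l m z, Stmt13Aux.expand z⟩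
  have hw : ∀ J K L M : Fin d, Stmt13Aux.coefLM d C J K L M z = w J K L M := by
    intro J K L M
    conv_lhs => rw [hzexp]
    exact Stmt13Aux.coef_sum w J K L M
  -- the coefficient identity coming from the commutation hypothesis
  have key : ∀ p q J K L M : Fin d,
      (if p = J then w q K L M else 0) = (if q = M then w J K L p else 0) := by
    intro p q J K L M
    have h := congrArg (Stmt13Aux.coefLM d C J K L M) (hz (Matrix.single p q 1))
    rw [Stmt13Aux.coef_mul_left, Stmt13Aux.coef_mul_right, hw, hw] at h
    exact h
  set j0 : Fin d := ⟨0, hd⟩ with hj0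
  have hw0 : ∀ q K L M : Fin d, w q K L M = if q = M then w j0 K L j0 else 0 := by
    intro q K L M
    have h := key j0 q j0 K L M
    simpa using h
  have hz2 : z = ∑ j : Fin d, ∑ k : Fin d, ∑ l : Fin d,
      (Matrix.single j k (1 : ℂ) ⊗ₜ[ℂ] Matrix.single l j (1 : ℂ)) ⊗ₜ[ℂ]
        w j0 k l j0 := by
    rw [hzexp]
    refine Finset.sum_congr rfl fun j _ => Finset.sum_congr rfl fun k _ =>
      Finset.sum_congr rfl fun l _ => ?_
    have : ∀ m : Fin d,
        (Matrix.single j k (1 : ℂ) ⊗ₜ[ℂ] Matrix.single l m (1 : ℂ)) ⊗ₜ[ℂ]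
          w j k l m
        = if j = m then
            (Matrix.single j k (1 : ℂ) ⊗ₜ[ℂ] Matrix.single l m (1 : ℂ))
              ⊗ₜ[ℂ] w j0 k l j0 else 0 := by
      intro m
      rw [hw0 j k l m, TensorProduct.tmul_ite]
    rw [Finset.sum_congr rfl fun m _ => this m, Finset.sum_ite_eq]
    simp
  refine ⟨fun l k => w j0 k l j0, hz2, ?_⟩
  have h1 := hΔBz
  rw [hz2] at h1
  simp only [map_sum, hΔB] at h1
  have h2 := congrArg
    ((TensorProduct.lid ℂ A).toLinearMap ∘ₗ LinearMap.rTensor A (Stmt13Aux.entryLM d j0 j0)) h1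
  rw [Algebra.TensorProduct.one_def, Stmt13Aux.rowcoef_tmul, Matrix.one_apply_eq, one_smul] at h2
  rw [← h2]
  simp only [map_sum, Stmt13Aux.std_mul, TensorProduct.ite_tmul,
    apply_ite ((TensorProduct.lid ℂ A).toLinearMap ∘ₗ
      LinearMap.rTensor A (Stmt13Aux.entryLM d j0 j0)), map_zero, Stmt13Aux.rowcoef_tmul]
  simp [Matrix.single, ite_and, Finset.sum_ite_eq, Finset.sum_ite_eq']
end

section
/- Let M ≥ 1 and let B be a unital Banach algebra which has an approximate diagonal of norm at most M. Let G ⊂ inv(B) be a finite subgroup of the group of invertible elements. Then for every ε > 0 there exists z in the projective tensor product B ⊗̂ B such that ‖z‖_π < M + ε, Δ_B(z) = 1, and (g ⊗ 1) z = z (1 ⊗ g) for all g ∈ G. -/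
/-- Lemma 5.1: if the unital Banach algebra `B` has an approximate diagonal with norm at
most `M` (in `B ⊗̂ B`, modelled abstractly by a Banach algebra `P` with a bilinear map
`τ` of norm `≤ 1` representing elementary tensors and `Δ_B` the induced multiplication
map), and `G` is a finite subgroup of the invertible group of `B`, then for every `ε > 0`
there is `z ∈ B ⊗̂ B` with `‖z‖ < M + ε`, `Δ_B(z) = 1`, and `(g ⊗ 1) z = z (1 ⊗ g)` for
all `g ∈ G`. -/
theorem stmt_14 (B : Type*) [NormedRing B] [NormedAlgebra ℂ B] [CompleteSpace B]
    (P : Type*) [NormedRing P] [NormedAlgebra ℂ P] [CompleteSpace P]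
    (τ : B →ₗ[ℂ] B →ₗ[ℂ] P) (hτn : ∀ a b : B, ‖τ a b‖ ≤ ‖a‖ * ‖b‖)
    (hτ1 : τ 1 1 = 1)
    (hτmul : ∀ a b c d : B, τ a b * τ c d = τ (a * c) (b * d))
    (ΔB : P →L[ℂ] B) (hΔBn : ‖ΔB‖ ≤ 1) (hΔB : ∀ a b : B, ΔB (τ a b) = a * b)
    (hΔmod : ∀ (a b : B) (x : P), ΔB (τ a 1 * x * τ 1 b) = a * ΔB x * b)
    (M : ℝ) (hM : 1 ≤ M)
    (happrox : ∀ ε > (0 : ℝ), ∀ S : Finset B, ∃ m : P, ‖m‖ ≤ M ∧ ‖ΔB m - 1‖ < ε ∧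
      ∀ a ∈ S, ‖τ a 1 * m - m * τ 1 a‖ < ε)
    (G : Subgroup Bˣ) (hG : (G : Set Bˣ).Finite) :
    ∀ ε > (0 : ℝ), ∃ z : P, ‖z‖ < M + ε ∧ ΔB z = 1 ∧
      ∀ g : Bˣ, g ∈ G → τ (g : B) 1 * z = z * τ 1 (g : B) := by
  intro ε hε
  classical
  set c1 : ℝ := ‖(1 : B)‖ with hc1
  have hc1n : (0:ℝ) ≤ c1 := norm_nonneg _
  set s : Finset Bˣ := hG.toFinset with hsdef
  have hmem : ∀ g : Bˣ, g ∈ s ↔ g ∈ G := fun g => hG.mem_toFinset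
  have h1s : (1 : Bˣ) ∈ s := (hmem 1).mpr G.one_mem
  set w : Bˣ → ℝ := fun g =>
    (1 + c1 * ‖((g⁻¹ : Bˣ) : B)‖ + ‖((g⁻¹ : Bˣ) : B)‖) * (c1 * ‖(g : B)‖) with hw
  have hwnn : ∀ g, 0 ≤ w g := fun g => mul_nonneg (by positivity) (by positivity)
  set K : ℝ := ∑ g ∈ s, w g with hK
  have hKnn : 0 ≤ K := Finset.sum_nonneg fun g _ => hwnn g
  have hden : (0:ℝ) < 2 * (1 + c1 + K) := by positivity
  set δ : ℝ := ε / (2 * (1 + c1 + K)) with hδdef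
  have hδpos : 0 < δ := div_pos hε hden
  have hδε : δ * (2 * (1 + c1 + K)) = ε := div_mul_cancel₀ ε (ne_of_gt hden)
  obtain ⟨m, hmnorm, hΔm, hcomm⟩ := happrox δ hδpos (s.image fun g => ((g⁻¹ : Bˣ) : B))
  set e : B := 1 - ΔB m with he
  have hen : ‖e‖ < δ := by
    rw [he, ← norm_neg]; simpa using hΔm
  set m₁ : P := m + τ e 1 with hm₁def
  have hΔm₁ : ΔB m₁ = 1 := by
    rw [hm₁def, map_add, hΔB, he]; noncomm_ring
  have hm₁n : ‖m₁‖ ≤ M + δ * c1 := by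
    calc ‖m₁‖ ≤ ‖m‖ + ‖τ e 1‖ := norm_add_le _ _
      _ ≤ M + δ * c1 := by
          refine add_le_add hmnorm ?_
          exact le_trans (hτn e 1) (mul_le_mul_of_nonneg_right hen.le hc1n)
  -- commutator estimate for m₁
  have hD : ∀ g ∈ s,
      ‖τ ((g⁻¹ : Bˣ) : B) 1 * m₁ - m₁ * τ 1 ((g⁻¹ : Bˣ) : B)‖ ≤
        δ * (1 + c1 * ‖((g⁻¹ : Bˣ) : B)‖ + ‖((g⁻¹ : Bˣ) : B)‖) := by
    intro g hg
    set a : B := ((g⁻¹ : Bˣ) : B) with ha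
    have hmema : a ∈ s.image fun g => ((g⁻¹ : Bˣ) : B) :=
      Finset.mem_image.mpr ⟨g, hg, rfl⟩
    have herr : ‖τ a 1 * m - m * τ 1 a‖ < δ := hcomm a hmema
    have hsplit : τ a 1 * m₁ - m₁ * τ 1 a =
        (τ a 1 * m - m * τ 1 a) + (τ (a * e) 1 - τ e a) := by
      rw [hm₁def, mul_add, add_mul, hτmul, hτmul, mul_one, one_mul, mul_one]
      abel
    rw [hsplit]
    have h1 : ‖τ (a * e) 1‖ ≤ ‖a‖ * δ * c1 := by
      refine le_trans (hτn (a * e) 1) ?_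
      have : ‖a * e‖ ≤ ‖a‖ * δ :=
        le_trans (norm_mul_le _ _) (mul_le_mul_of_nonneg_left hen.le (norm_nonneg a))
      exact mul_le_mul_of_nonneg_right this hc1n
    have h2 : ‖τ e a‖ ≤ δ * ‖a‖ := by
      refine le_trans (hτn e a) ?_
      exact mul_le_mul_of_nonneg_right hen.le (norm_nonneg a)
    calc ‖(τ a 1 * m - m * τ 1 a) + (τ (a * e) 1 - τ e a)‖
        ≤ ‖τ a 1 * m - m * τ 1 a‖ + (‖τ (a * e) 1‖ + ‖τ e a‖) :=
          le_trans (norm_add_le _ _) (by gcongr; exact norm_sub_le _ _)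
      _ ≤ δ * (1 + c1 * ‖a‖ + ‖a‖) := by nlinarith [norm_nonneg a]
  set T : Bˣ → P := fun g => τ ((g⁻¹ : Bˣ) : B) 1 * m₁ * τ 1 (g : B) with hT
  set n : ℕ := s.card with hn
  have hnpos : 0 < n := Finset.card_pos.mpr ⟨1, h1s⟩
  have hncast : ((n : ℂ)) ≠ 0 := Nat.cast_ne_zero.mpr hnpos.ne'
  set z : P := (n : ℂ)⁻¹ • ∑ g ∈ s, T g with hz
  refine ⟨z, ?_, ?_, ?_⟩
  · -- norm estimate
    have hTm : ∀ g ∈ s, ‖T g - m₁‖ ≤ δ * w g := by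
      intro g hg
      set a : B := ((g⁻¹ : Bˣ) : B) with ha
      have h1 : τ (1:B) a * τ 1 ((g:Bˣ) : B) = 1 := by
        rw [hτmul, one_mul, ha, Units.inv_mul, hτ1]
      have hkey : T g - m₁ = (τ a 1 * m₁ - m₁ * τ 1 a) * τ 1 (g : B) := by
        rw [hT, sub_mul, mul_assoc m₁, h1, mul_one]
      rw [hkey]
      have h2 : ‖τ (1:B) ((g:Bˣ):B)‖ ≤ c1 * ‖(g:B)‖ := hτn 1 _
      calc ‖(τ a 1 * m₁ - m₁ * τ 1 a) * τ 1 (g : B)‖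
          ≤ ‖τ a 1 * m₁ - m₁ * τ 1 a‖ * ‖τ (1:B) ((g:Bˣ):B)‖ := norm_mul_le _ _
        _ ≤ (δ * (1 + c1 * ‖a‖ + ‖a‖)) * (c1 * ‖(g:B)‖) := by
            refine mul_le_mul (hD g hg) h2 (norm_nonneg _) ?_
            positivity
        _ = δ * w g := by rw [hw]; ring
    have hzm : z - m₁ = (n : ℂ)⁻¹ • ∑ g ∈ s, (T g - m₁) := by
      rw [Finset.sum_sub_distrib, Finset.sum_const, smul_sub, hz]
      congr 1
      rw [← Nat.cast_smul_eq_nsmul ℂ, smul_smul, inv_mul_cancel₀ hncast, one_smul]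
    have hzm_norm : ‖z - m₁‖ ≤ δ * K := by
      rw [hzm]
      have h1 : ‖(n : ℂ)⁻¹‖ ≤ 1 := by
        rw [norm_inv, Complex.norm_natCast]
        exact inv_le_one_of_one_le₀ (by exact_mod_cast hnpos)
      calc ‖(n : ℂ)⁻¹ • ∑ g ∈ s, (T g - m₁)‖
          = ‖(n : ℂ)⁻¹‖ * ‖∑ g ∈ s, (T g - m₁)‖ := norm_smul _ _
        _ ≤ 1 * ‖∑ g ∈ s, (T g - m₁)‖ :=
            mul_le_mul_of_nonneg_right h1 (norm_nonneg _)
        _ = ‖∑ g ∈ s, (T g - m₁)‖ := one_mul _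
        _ ≤ ∑ g ∈ s, ‖T g - m₁‖ := norm_sum_le _ _
        _ ≤ ∑ g ∈ s, δ * w g := Finset.sum_le_sum hTm
        _ = δ * K := by rw [hK, Finset.mul_sum]
    have : ‖z‖ ≤ M + δ * c1 + δ * K := by
      calc ‖z‖ = ‖m₁ + (z - m₁)‖ := by rw [add_sub_cancel]
        _ ≤ ‖m₁‖ + ‖z - m₁‖ := norm_add_le _ _
        _ ≤ M + δ * c1 + δ * K := by linarith
    nlinarith [hδpos, hc1n, hKnn]
  · -- ΔB z = 1
    rw [hz, map_smul, map_sum]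
    have : ∀ g ∈ s, ΔB (T g) = 1 := by
      intro g hg
      rw [hT]
      simp only
      rw [hΔmod, hΔm₁, mul_one, Units.inv_mul]
    rw [Finset.sum_congr rfl this, Finset.sum_const,
      ← Nat.cast_smul_eq_nsmul ℂ, smul_smul, inv_mul_cancel₀ hncast, one_smul]
  · -- equivariance
    intro h hh
    have key : ∀ g ∈ s, τ ((h:Bˣ):B) 1 * T g = T (g * h⁻¹) * τ 1 ((h:Bˣ):B) := by
      intro g hg
      have hb : ((g * h⁻¹)⁻¹ : Bˣ) = h * g⁻¹ := by rw [mul_inv_rev, inv_inv]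
      have e1 : τ ((h:Bˣ):B) 1 * τ ((g⁻¹ : Bˣ) : B) 1 =
          τ (((h:Bˣ):B) * ((g⁻¹:Bˣ):B)) 1 := by rw [hτmul, one_mul]
      have e2 : τ (1:B) (((g * h⁻¹ : Bˣ)):B) * τ 1 ((h:Bˣ):B) = τ 1 ((g:Bˣ):B) := by
        rw [hτmul, one_mul, Units.val_mul, mul_assoc, Units.inv_mul, mul_one]
      calc τ ((h:Bˣ):B) 1 * T g
          = τ (((h:Bˣ):B) * ((g⁻¹:Bˣ):B)) 1 * m₁ * τ 1 ((g:Bˣ):B) := by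
            rw [hT]; simp only
            rw [← mul_assoc, ← mul_assoc, e1]
        _ = T (g * h⁻¹) * τ 1 ((h:Bˣ):B) := by
            rw [hT]; simp only
            rw [mul_assoc _ _ (τ (1:B) ((h:Bˣ):B)), e2, hb, Units.val_mul]
    have hreindex : ∑ g ∈ s, T (g * h⁻¹) = ∑ g ∈ s, T g := by
      refine Finset.sum_equiv (Equiv.mulRight h⁻¹) ?_ ?_
      · intro g
        simp only [hmem, Equiv.coe_mulRight]
        exact ⟨fun hgG => G.mul_mem hgG (G.inv_mem hh), fun hgG => by
          simpa using G.mul_mem hgG hh⟩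
      · intro g _; rfl
    calc τ ((h:Bˣ):B) 1 * z
        = (n : ℂ)⁻¹ • (τ ((h:Bˣ):B) 1 * ∑ g ∈ s, T g) := by
          rw [hz, mul_smul_comm]
      _ = (n : ℂ)⁻¹ • ∑ g ∈ s, τ ((h:Bˣ):B) 1 * T g := by rw [Finset.mul_sum]
      _ = (n : ℂ)⁻¹ • ∑ g ∈ s, T (g * h⁻¹) * τ 1 ((h:Bˣ):B) := by
          rw [Finset.sum_congr rfl key]
      _ = (n : ℂ)⁻¹ • ((∑ g ∈ s, T (g * h⁻¹)) * τ 1 ((h:Bˣ):B)) := by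
          rw [Finset.sum_mul]
      _ = (n : ℂ)⁻¹ • ((∑ g ∈ s, T g) * τ 1 ((h:Bˣ):B)) := by rw [hreindex]
      _ = z * τ 1 ((h:Bˣ):B) := by rw [hz, smul_mul_assoc]
end
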